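/- For every α ∈ (0,1), let x ∈ (0,1) be the unique solution of (x - 1)/ln x = α. Then there exist γ₁ ∈ (0,1) and γ₂ ∈ (0, (1 + γ₁)/2) such that α = (3/2 - γ₁/2 - γ₂)/ln((1 + γ₁)/(2·γ₁·γ₂)) and 1/(3/2 - γ₁/2 - γ₂) < 1/(1 - x). In other words, for every storage rate the CP-WOM system achieves a strictly smaller erasure factor than the baseline system. -/

import Mathlib

/-- For every `α ∈ (0,1)`, with `x ∈ (0,1)` the unique solution of `(x - 1)/ln x = α`,
there exist `γ₁ ∈ (0,1)` and `γ₂ ∈ (0, (1 + γ₁)/2)` with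
`α = (3/2 - γ₁/2 - γ₂)/ln((1 + γ₁)/(2 γ₁ γ₂))` and
`1/(3/2 - γ₁/2 - γ₂) < 1/(1 - x)`: the CP-WOM system achieves a strictly smaller
erasure factor than the baseline system. -/
theorem cpWOM_beats_baseline :
    ∀ α ∈ Set.Ioo (0:ℝ) 1, ∀ x ∈ Set.Ioo (0:ℝ) 1,
      (x - 1) / Real.log x = α →
      ∃ γ₁ ∈ Set.Ioo (0:ℝ) 1, ∃ γ₂ ∈ Set.Ioo (0:ℝ) ((1 + γ₁) / 2),
        α = (3/2 - γ₁/2 - γ₂) / Real.log ((1 + γ₁) / (2 * γ₁ * γ₂)) ∧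
        1 / (3/2 - γ₁/2 - γ₂) < 1 / (1 - x) := by
  rintro α ⟨hα0, hα1⟩ x ⟨hx0, hx1⟩ hαx
  have hlx : Real.log x < 0 := Real.log_neg hx0 hx1
  have hxne : Real.log x ≠ 0 := ne_of_lt hlx
  have hkey : x - 1 = α * Real.log x := by
    field_simp at hαx
    linarith [hαx]
  -- γ₁
  set g : ℝ := (x + 1) / 2 with hg
  have hg0 : 0 < g := by positivity
  have hg1 : g < 1 := by rw [hg]; linarith
  have hxg : x < g := by rw [hg]; linarith
  set c : ℝ := (1 + g) / (2 * g) with hc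
  have hc0 : 0 < c := by positivity
  set b : ℝ := x * c with hb
  set a : ℝ := c * Real.exp (-2 / α) with ha
  have ha0 : 0 < a := by positivity
  have hb0 : 0 < b := by positivity
  have hab : a < b := by
    rw [ha, hb, mul_comm x c]
    apply mul_lt_mul_of_pos_left _ hc0
    rw [← Real.exp_log hx0]
    apply Real.exp_lt_exp.2
    rw [div_lt_iff₀ hα0] at *
    nlinarith [hkey]
  set f : ℝ → ℝ := fun t => (3/2 - g/2 - t) - α * (Real.log c - Real.log t) with hf
  have hcont : ContinuousOn f (Set.Icc a b) := by
    apply ContinuousOn.sub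
    · fun_prop
    · apply ContinuousOn.mul continuousOn_const
      apply ContinuousOn.sub continuousOn_const
      apply Real.continuousOn_log.comp continuousOn_id
      intro t ht
      exact ne_of_gt (lt_of_lt_of_le ha0 ht.1)
  have hfa : f a < 0 := by
    have : Real.log a = Real.log c + (-2 / α) := by
      rw [ha, Real.log_mul (ne_of_gt hc0) (Real.exp_ne_zero _), Real.log_exp]
    rw [hf]
    simp only [this]
    have : α * (Real.log c - (Real.log c + -2 / α)) = 2 := by
      field_simp; ring
    rw [this]
    linarith [ha0, hg0]
  have hlogb : Real.log b = Real.log x + Real.log c :=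
    Real.log_mul (ne_of_gt hx0) (ne_of_gt hc0)
  have hfb : 0 < f b := by
    rw [hf]
    simp only [hlogb]
    have : Real.log c - (Real.log x + Real.log c) = -Real.log x := by ring
    rw [this]
    have hαlx : α * -Real.log x = 1 - x := by linarith [hkey]
    have hbval : b = x * ((1 + g) / (2 * g)) := by rw [hb, hc]
    rw [hbval, hαlx]
    rw [show (3:ℝ)/2 - g/2 - x * ((1 + g) / (2 * g)) - (1 - x)
          = ((1 - g) * (g - x)) / (2 * g) by field_simp; ring]
    apply div_pos (mul_pos (by linarith) (by linarith)) (by positivity)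
  -- intermediate value theorem
  have hivt := intermediate_value_Icc (le_of_lt hab) hcont
  have h0mem : (0:ℝ) ∈ Set.Icc (f a) (f b) := ⟨le_of_lt hfa, le_of_lt hfb⟩
  obtain ⟨t, ⟨hta, htb⟩, htf⟩ := hivt h0mem
  have ht0 : 0 < t := lt_of_lt_of_le ha0 hta
  have htb' : t < b := lt_of_le_of_ne htb (by rintro rfl; rw [htf] at hfb; exact lt_irrefl 0 hfb)
  have hlogt : Real.log t < Real.log b := Real.log_lt_log ht0 htb'
  have hD : -Real.log x < Real.log c - Real.log t := by
    rw [hlogb] at hlogt; linarith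
  have hD0 : 0 < Real.log c - Real.log t := lt_trans (by linarith) hD
  have hN : α * (Real.log c - Real.log t) = 3/2 - g/2 - t := by
    have := htf
    rw [hf] at this
    linarith [this]
  have hNx : 1 - x < 3/2 - g/2 - t := by
    have h1 : α * -Real.log x = 1 - x := by linarith [hkey]
    nlinarith [hD, hα0]
  refine ⟨g, ⟨hg0, hg1⟩, t, ⟨ht0, ?_⟩, ?_, ?_⟩
  · -- t < (1 + g) / 2
    have : b < (1 + g) / 2 := by
      rw [hb, hc]
      calc x * ((1 + g) / (2 * g)) < g * ((1 + g) / (2 * g)) := by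
            exact mul_lt_mul_of_pos_right hxg (by positivity)
        _ = (1 + g) / 2 := by field_simp
    linarith
  · -- α = N / D
    have hlogdiv : Real.log ((1 + g) / (2 * g * t)) = Real.log c - Real.log t := by
      rw [hc]
      rw [Real.log_div (by positivity) (by positivity),
          Real.log_div (by positivity) (by positivity),
          Real.log_mul (by positivity) (ne_of_gt ht0)]
      ring
    rw [hlogdiv, eq_div_iff (ne_of_gt hD0)]
    linarith [hN]
  · -- 1 / N < 1 / (1 - x)
    apply one_div_lt_one_div_of_lt (by linarith) hNx
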